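/- Let a > 0 with a ≠ 1. Consider the complex solutions ω of the equation 1 + (1 − a²)·ω² = 0. (i) If a ∈ (0,1), the solutions are ω = ±i/√(1 − a²); they satisfy |ω| > 1 and the corresponding values z = (ω + ω^{−1})/2 are ±i·a²/(2√(1 − a²)). (ii) If a ∈ (1, √2), the solutions are ω = ±1/√(a² − 1); they satisfy |ω| > 1 and the corresponding values z = (ω + ω^{−1})/2 are ±a²/(2√(a² − 1)). (iii) If a > √2, every solution satisfies |ω| < 1. -/

import Mathlib

lemma root_iff (c r ω : ℂ) (hc : c ≠ 0) (h : c * r ^ 2 = -1) :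
    1 + c * ω ^ 2 = 0 ↔ ω = r ∨ ω = -r := by
  have : (1 + c * ω ^ 2 = 0) ↔ ω ^ 2 = r ^ 2 := by
    constructor
    · intro hω
      have h2 : c * (ω ^ 2 - r ^ 2) = 0 := by linear_combination hω - h
      rcases mul_eq_zero.1 h2 with h3 | h3
      · exact absurd h3 hc
      · exact sub_eq_zero.1 h3
    · intro hω; linear_combination c * hω + h
  rw [this, sq_eq_sq_iff_eq_or_eq_neg]

lemma neg_half (x y : ℂ) (h : (x + x⁻¹) / 2 = y) : (-x + (-x)⁻¹) / 2 = -y := by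
  rw [inv_neg]; rw [← h]; ring

/-- Resonances and eigenvalues of `H_a`: the complex solutions `ω` of
`1 + (1 − a²)ω² = 0`. For `a ∈ (0,1)` they are `±i/√(1 − a²)`, have
`|ω| > 1`, and correspond to `z = (ω + ω⁻¹)/2 = ±i·a²/(2√(1 − a²))`; for
`a ∈ (1,√2)` they are `±1/√(a² − 1)`, have `|ω| > 1`, and correspond to
`z = ±a²/(2√(a² − 1))`; for `a > √2` every solution satisfies `|ω| < 1`. -/
theorem stmt17 (a : ℝ) (ha : 0 < a) (hne : a ≠ 1) :
    (a < 1 →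
      (∀ ω : ℂ, 1 + ((1 - a ^ 2 : ℝ) : ℂ) * ω ^ 2 = 0 ↔
        ω = Complex.I / ((Real.sqrt (1 - a ^ 2) : ℝ) : ℂ) ∨
        ω = -(Complex.I / ((Real.sqrt (1 - a ^ 2) : ℝ) : ℂ))) ∧
      (∀ ω : ℂ, 1 + ((1 - a ^ 2 : ℝ) : ℂ) * ω ^ 2 = 0 →
        1 < ‖ω‖ ∧
        ((ω + ω⁻¹) / 2 =
            Complex.I * ((a ^ 2 : ℝ) : ℂ) / (2 * ((Real.sqrt (1 - a ^ 2) : ℝ) : ℂ)) ∨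
          (ω + ω⁻¹) / 2 =
            -(Complex.I * ((a ^ 2 : ℝ) : ℂ) / (2 * ((Real.sqrt (1 - a ^ 2) : ℝ) : ℂ)))))) ∧
    (1 < a → a < Real.sqrt 2 →
      (∀ ω : ℂ, 1 + ((1 - a ^ 2 : ℝ) : ℂ) * ω ^ 2 = 0 ↔
        ω = (1 : ℂ) / ((Real.sqrt (a ^ 2 - 1) : ℝ) : ℂ) ∨
        ω = -((1 : ℂ) / ((Real.sqrt (a ^ 2 - 1) : ℝ) : ℂ))) ∧
      (∀ ω : ℂ, 1 + ((1 - a ^ 2 : ℝ) : ℂ) * ω ^ 2 = 0 →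
        1 < ‖ω‖ ∧
        ((ω + ω⁻¹) / 2 = ((a ^ 2 / (2 * Real.sqrt (a ^ 2 - 1)) : ℝ) : ℂ) ∨
          (ω + ω⁻¹) / 2 = -((a ^ 2 / (2 * Real.sqrt (a ^ 2 - 1)) : ℝ) : ℂ)))) ∧
    (Real.sqrt 2 < a →
      ∀ ω : ℂ, 1 + ((1 - a ^ 2 : ℝ) : ℂ) * ω ^ 2 = 0 → ‖ω‖ < 1) := by
  refine ⟨?_, ?_, ?_⟩
  · -- case a < 1
    intro ha1
    set s : ℝ := Real.sqrt (1 - a ^ 2) with hsdef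
    have hpos : (0:ℝ) < 1 - a ^ 2 := by nlinarith
    have hs : 0 < s := Real.sqrt_pos.2 hpos
    have hs2 : s ^ 2 = 1 - a ^ 2 := Real.sq_sqrt hpos.le
    have hsne : (s:ℂ) ≠ 0 := by exact_mod_cast hs.ne'
    have hcne : ((1 - a ^ 2 : ℝ) : ℂ) ≠ 0 := by exact_mod_cast hpos.ne'
    have hcast : ((1 - a ^ 2 : ℝ) : ℂ) = (s:ℂ) ^ 2 := by
      exact_mod_cast congrArg Complex.ofReal hs2.symm
    have hs2c : (s:ℂ) ^ 2 = 1 - (a:ℂ) ^ 2 := by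
      exact_mod_cast congrArg Complex.ofReal hs2
    have hroot : ((1 - a ^ 2 : ℝ) : ℂ) * (Complex.I / (s:ℂ)) ^ 2 = -1 := by
      rw [hcast, div_pow, Complex.I_sq]; field_simp
    have hiff := fun ω => root_iff _ (Complex.I / (s:ℂ)) ω hcne hroot
    refine ⟨hiff, ?_⟩
    intro ω hω
    have habsr : ‖Complex.I / (s:ℂ)‖ = 1 / s := by
      rw [norm_div, Complex.norm_I, Complex.norm_real, Real.norm_eq_abs, abs_of_pos hs]
    have hslt1 : s < 1 := by nlinarith
    have habs : 1 < ‖ω‖ := by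
      rcases (hiff ω).1 hω with h | h <;> rw [h]
      · rw [habsr, lt_div_iff₀ hs]; linarith
      · rw [norm_neg, habsr, lt_div_iff₀ hs]; linarith
    refine ⟨habs, ?_⟩
    have key : (Complex.I / (s:ℂ) + (Complex.I / (s:ℂ))⁻¹) / 2
        = Complex.I * ((a ^ 2 : ℝ) : ℂ) / (2 * (s:ℂ)) := by
      push_cast
      field_simp
      linear_combination hs2c + (1 - (a:ℂ) ^ 2) * Complex.I_sq
    rcases (hiff ω).1 hω with h | h
    · left; rw [h]; exact key
    · right; rw [h]; exact neg_half _ _ key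
  · -- case 1 < a < √2
    intro ha1 ha2
    set t : ℝ := Real.sqrt (a ^ 2 - 1) with htdef
    have hpos : (0:ℝ) < a ^ 2 - 1 := by nlinarith
    have ht : 0 < t := Real.sqrt_pos.2 hpos
    have ht2 : t ^ 2 = a ^ 2 - 1 := Real.sq_sqrt hpos.le
    have htne : (t:ℂ) ≠ 0 := by exact_mod_cast ht.ne'
    have hcne : ((1 - a ^ 2 : ℝ) : ℂ) ≠ 0 := by
      simp only [ne_eq, Complex.ofReal_eq_zero]; nlinarith
    have hcast : ((1 - a ^ 2 : ℝ) : ℂ) = -((t:ℂ) ^ 2) := by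
      rw [show (1 - a ^ 2 : ℝ) = -(t ^ 2) by linarith]; push_cast; ring
    have ht2c : (t:ℂ) ^ 2 = (a:ℂ) ^ 2 - 1 := by
      exact_mod_cast congrArg Complex.ofReal ht2
    have hroot : ((1 - a ^ 2 : ℝ) : ℂ) * ((1:ℂ) / (t:ℂ)) ^ 2 = -1 := by
      rw [hcast]; field_simp
    have hiff := fun ω => root_iff _ ((1:ℂ) / (t:ℂ)) ω hcne hroot
    refine ⟨hiff, ?_⟩
    intro ω hω
    have ha22 : a ^ 2 < 2 := by
      have h := Real.sq_sqrt (by norm_num : (0:ℝ) ≤ 2)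
      nlinarith [Real.sqrt_nonneg 2]
    have htlt1 : t < 1 := by nlinarith
    have habsr : ‖(1:ℂ) / (t:ℂ)‖ = 1 / t := by
      rw [norm_div, norm_one, Complex.norm_real, Real.norm_eq_abs, abs_of_pos ht]
    have habs : 1 < ‖ω‖ := by
      rcases (hiff ω).1 hω with h | h <;> rw [h]
      · rw [habsr, lt_div_iff₀ ht]; linarith
      · rw [norm_neg, habsr, lt_div_iff₀ ht]; linarith
    refine ⟨habs, ?_⟩
    have key : ((1:ℂ) / (t:ℂ) + ((1:ℂ) / (t:ℂ))⁻¹) / 2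
        = ((a ^ 2 / (2 * t) : ℝ) : ℂ) := by
      push_cast
      field_simp
      linear_combination ht2c
    rcases (hiff ω).1 hω with h | h
    · left; rw [h]; exact key
    · right; rw [h]; exact neg_half _ _ key
  · -- case √2 < a
    intro ha2 ω hω
    have h2 : (2:ℝ) < a ^ 2 := by
      have h := Real.sq_sqrt (by norm_num : (0:ℝ) ≤ 2)
      nlinarith [Real.sqrt_nonneg 2]
    have hA : ((1 - a ^ 2 : ℝ) : ℂ) * ω ^ 2 = -1 := by linear_combination hω
    have habs : (a ^ 2 - 1) * ‖ω‖ ^ 2 = 1 := by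
      have := congrArg norm hA
      rw [norm_mul, norm_pow, Complex.norm_real, Real.norm_eq_abs,
        abs_of_neg (by nlinarith : (1 - a ^ 2 : ℝ) < 0)] at this
      simp only [norm_neg, norm_one] at this
      nlinarith [this]
    have hlt : ‖ω‖ ^ 2 < 1 := by nlinarith
    nlinarith [norm_nonneg ω]
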